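/- Let m ≥ 3 and let U ⊆ ℂ be open with 0 ∈ U. Let f̃ : U → Mat(2×(2m−4), ℂ) be a function, and suppose f : U → Mat(2×(2m−4), ℂ) and g : U → Mat(2×2, ℂ) are complex-differentiable on U with f(0) = 0, g(0) = 0, f′ = f̃, and g′ = −f·f̃^♯. For λ ∈ ℂ \ {0} define the 2m×2m-matrix-valued function H_λ := I_{2m} + λ⁻¹H₁ + λ⁻²H₂, where with respect to the block splitting 2m = 2 + (2m−4) + 2, H₁ = ((0, f, 0), (0, 0, −f^♯), (0, 0, 0)) and H₂ = ((0, 0, g), (0, 0, 0), (0, 0, 0)). Then for every λ ≠ 0: H_λ(0) = I_{2m} and H_λ is complex-differentiable on U with H_λ′ = H_λ · (λ⁻¹ η̃₋₁), where η̃₋₁ = ((0, f̃, 0), (0, 0, −f̃^♯), (0, 0, 0)). -/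

import Mathlib

open Matrix

noncomputable section

/-- `J_k`: the k×k matrix with ones on the antidiagonal. -/
def Jmat (k : ℕ) : Matrix (Fin k) (Fin k) ℂ :=
  fun i j => if (i : ℕ) + (j : ℕ) = k - 1 then 1 else 0

/-- `X^♯ = J_k Xᵗ J₂` for a 2×k matrix `X`. -/
def sharp (k : ℕ) (X : Matrix (Fin 2) (Fin k) ℂ) : Matrix (Fin k) (Fin 2) ℂ :=
  Jmat k * Xᵀ * Jmat 2

/-- The 2m×2m matrix `((0, f, 0), (0, 0, −f^♯), (0, 0, 0))` w.r.t. the splitting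
`2m = 2 + (2m−4) + 2`. -/
def triMat (m : ℕ) (f : Matrix (Fin 2) (Fin (2 * m - 4)) ℂ) :
    Matrix (Fin (2 * m)) (Fin (2 * m)) ℂ := fun i j =>
  if hi : (i : ℕ) < 2 then
    if hj1 : (j : ℕ) < 2 then 0
    else if hj : (j : ℕ) < 2 * m - 2 then
      f ⟨(i : ℕ), hi⟩ ⟨(j : ℕ) - 2, by have := j.isLt; omega⟩
    else 0
  else if hi2 : (i : ℕ) < 2 * m - 2 then
    if hj : (j : ℕ) < 2 * m - 2 then 0
    else
      -(sharp (2 * m - 4) f ⟨(i : ℕ) - 2, by have := i.isLt; omega⟩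
          ⟨(j : ℕ) - (2 * m - 2), by have := j.isLt; omega⟩)
  else 0

/-- The 2m×2m matrix `((0, 0, g), (0, 0, 0), (0, 0, 0))` w.r.t. the splitting
`2m = 2 + (2m−4) + 2`. -/
def cornerMat (m : ℕ) (g : Matrix (Fin 2) (Fin 2) ℂ) :
    Matrix (Fin (2 * m)) (Fin (2 * m)) ℂ := fun i j =>
  if hi : (i : ℕ) < 2 then
    if hj : 2 * m - 2 ≤ (j : ℕ) then
      g ⟨(i : ℕ), hi⟩ ⟨(j : ℕ) - (2 * m - 2), by have := j.isLt; omega⟩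
    else 0
  else 0

lemma sharp_apply (k : ℕ) (X : Matrix (Fin 2) (Fin k) ℂ) (i : Fin k) (j : Fin 2) :
    sharp k X i j
      = X ⟨1 - (j:ℕ), by omega⟩ ⟨k - 1 - (i:ℕ), by have := i.isLt; omega⟩ := by
  have hk : 0 < k := i.pos
  rw [sharp, Matrix.mul_apply]
  rw [Finset.sum_eq_single (⟨1 - (j:ℕ), by omega⟩ : Fin 2)]
  · rw [Matrix.mul_apply]
    rw [Finset.sum_eq_single (⟨k - 1 - (i:ℕ), by omega⟩ : Fin k)]
    · have hi := i.isLt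
      have hj := j.isLt
      simp [Jmat, Matrix.transpose_apply]
      rw [if_pos (by omega), if_pos (by omega)]
    · intro b _ hb
      have : (i:ℕ) + (b:ℕ) ≠ k - 1 := by
        intro h; apply hb; apply Fin.ext; simp; omega
      simp [Jmat, this]
    · simp
  · intro b _ hb
    have : (b:ℕ) + (j:ℕ) ≠ 2 - 1 := by
      intro h; apply hb; apply Fin.ext; simp
      have := b.isLt; have := j.isLt; omega
    simp [Jmat, this]
  · simp

lemma triMat_zero (m : ℕ) : triMat m 0 = 0 := by
  funext i j
  simp only [triMat, sharp, Matrix.transpose_zero, Matrix.mul_zero, Matrix.zero_mul]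
  split_ifs <;> simp

lemma cornerMat_zero (m : ℕ) : cornerMat m 0 = 0 := by
  funext i j
  simp only [cornerMat]
  split_ifs <;> simp

lemma corner_mul_tri (m : ℕ) (g : Matrix (Fin 2) (Fin 2) ℂ)
    (f : Matrix (Fin 2) (Fin (2 * m - 4)) ℂ) (hm : 3 ≤ m) :
    cornerMat m g * triMat m f = 0 := by
  funext i j
  rw [Matrix.mul_apply]
  apply Finset.sum_eq_zero
  intro l _
  have hl := l.isLt
  by_cases hi : (i:ℕ) < 2
  · by_cases hl2 : 2 * m - 2 ≤ (l:ℕ)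
    · have h1 : ¬ ((l:ℕ) < 2) := by omega
      have h2 : ¬ ((l:ℕ) < 2 * m - 2) := by omega
      simp [triMat, h1, h2]
    · simp [cornerMat, hi, hl2]
  · simp [cornerMat, hi]

lemma tri_mul_tri (m : ℕ) (hm : 3 ≤ m) (f ft : Matrix (Fin 2) (Fin (2 * m - 4)) ℂ) :
    triMat m f * triMat m ft = cornerMat m (-(f * sharp (2 * m - 4) ft)) := by
  funext i j
  rw [Matrix.mul_apply]
  have hi' := i.isLt
  have hj' := j.isLt
  by_cases hi : (i:ℕ) < 2
  · by_cases hj : 2 * m - 2 ≤ (j:ℕ)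
    · -- main case
      set F : ℕ → ℂ := fun l =>
        if h : l < 2 * m then triMat m f i ⟨l, h⟩ * triMat m ft ⟨l, h⟩ j else 0 with hF
      have e1 : ∑ l : Fin (2*m), triMat m f i l * triMat m ft l j = ∑ l : Fin (2*m), F (l:ℕ) := by
        apply Finset.sum_congr rfl
        intro l _
        simp [hF, l.isLt]
      rw [e1, Fin.sum_univ_eq_sum_range]
      have e2 : ∑ l ∈ Finset.range (2*m), F l = ∑ l ∈ Finset.Ico 2 (2*m-2), F l := by
        symm
        apply Finset.sum_subset
        · intro x hx
          simp at hx ⊢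
          omega
        · intro x hx hx'
          simp at hx hx'
          rcases Nat.lt_or_ge x 2 with h2 | h2
          · simp only [hF]
            rw [dif_pos hx]
            have : ¬ (2 ≤ x) := by omega
            simp [triMat, h2, hi]
          · have h3 : 2 * m - 2 ≤ x := by omega
            simp only [hF]
            rw [dif_pos hx]
            have hxl2 : ¬ (x < 2) := by omega
            have hxl3 : ¬ (x < 2 * m - 2) := by omega
            simp [triMat, hxl2, hxl3]
      rw [e2, Finset.sum_Ico_eq_sum_range]
      have hj2 : ¬ ((j:ℕ) < 2 * m - 2) := by omega
      have e3 : cornerMat m (-(f * sharp (2 * m - 4) ft)) i j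
          = -∑ l : Fin (2*m-4), f ⟨(i:ℕ), hi⟩ l *
              sharp (2*m-4) ft l ⟨(j:ℕ) - (2*m-2), by omega⟩ := by
        simp [cornerMat, hi, hj, Matrix.mul_apply]
      rw [e3, ← Finset.sum_neg_distrib]
      set G : ℕ → ℂ := fun l =>
        if h : l < 2 * m - 4 then
          -(f ⟨(i:ℕ), hi⟩ ⟨l, h⟩ * sharp (2*m-4) ft ⟨l, h⟩ ⟨(j:ℕ) - (2*m-2), by omega⟩)
        else 0 with hG
      have e4 : ∑ x : Fin (2*m-4),
          -(f ⟨(i:ℕ), hi⟩ x * sharp (2*m-4) ft x ⟨(j:ℕ) - (2*m-2), by omega⟩)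
          = ∑ x : Fin (2*m-4), G (x:ℕ) := by
        apply Finset.sum_congr rfl
        intro x _
        simp [hG, x.isLt]
      rw [e4, Fin.sum_univ_eq_sum_range]
      have hmm : 2*m-2-2 = 2*m-4 := by omega
      rw [hmm]
      apply Finset.sum_congr rfl
      intro l hl
      simp only [Finset.mem_range] at hl
      simp only [hF, hG]
      rw [dif_pos (show 2+l < 2*m by omega), dif_pos hl]
      have h1 : ¬ ((2:ℕ)+l < 2) := by omega
      have h2 : (2:ℕ)+l < 2*m-2 := by omega
      simp only [triMat]
      rw [dif_pos hi]
      rw [dif_neg h1, dif_pos h2, dif_neg h1, dif_pos h2, dif_neg hj2]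
      have hsub : (2:ℕ)+l-2 = l := by omega
      rw [mul_neg]
      congr 2 <;> simp [hsub]
    · -- j not in last block: both sides 0
      have hj2 : (j:ℕ) < 2 * m - 2 := by omega
      have : cornerMat m (-(f * sharp (2 * m - 4) ft)) i j = 0 := by
        simp [cornerMat, hi, hj]
      rw [this]
      apply Finset.sum_eq_zero
      intro l _
      by_cases hl : (l:ℕ) < 2
      · simp [triMat, hi, hl]
      · by_cases hl2 : (l:ℕ) < 2 * m - 2
        · have h2 : ¬ ((l:ℕ) < 2) := hl
          simp [triMat, hl, hl2, hj2]
        · simp [triMat, hi, hl, hl2]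
  · have : cornerMat m (-(f * sharp (2 * m - 4) ft)) i j = 0 := by simp [cornerMat, hi]
    rw [this]
    apply Finset.sum_eq_zero
    intro l _
    by_cases hi2 : (i:ℕ) < 2 * m - 2
    · by_cases hl : (l:ℕ) < 2 * m - 2
      · simp [triMat, hi, hi2, hl]
      · -- l in last block, triMat ft l j = 0
        have h1 : ¬ ((l:ℕ) < 2) := by omega
        simp [triMat, h1, hl]
    · simp [triMat, hi, hi2]

lemma hasDerivAt_triMat_entry (m : ℕ) (f : ℂ → Matrix (Fin 2) (Fin (2 * m - 4)) ℂ)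
    (ft : Matrix (Fin 2) (Fin (2 * m - 4)) ℂ) (z : ℂ)
    (hf : ∀ i j, HasDerivAt (fun w => f w i j) (ft i j) z) (i j : Fin (2 * m)) :
    HasDerivAt (fun w => triMat m (f w) i j) (triMat m ft i j) z := by
  by_cases hi : (i:ℕ) < 2
  · by_cases hj1 : (j:ℕ) < 2
    · simp only [triMat, dif_pos hi, dif_pos hj1]
      exact hasDerivAt_const _ _
    · by_cases hj : (j:ℕ) < 2*m-2
      · simp only [triMat, dif_pos hi, dif_neg hj1, dif_pos hj]
        exact hf _ _
      · simp only [triMat, dif_pos hi, dif_neg hj1, dif_neg hj]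
        exact hasDerivAt_const _ _
  · by_cases hi2 : (i:ℕ) < 2*m-2
    · by_cases hj : (j:ℕ) < 2*m-2
      · simp only [triMat, dif_neg hi, dif_pos hi2, dif_pos hj]
        exact hasDerivAt_const _ _
      · simp only [triMat, dif_neg hi, dif_pos hi2, dif_neg hj, sharp_apply]
        exact (hf _ _).neg
    · simp only [triMat, dif_neg hi, dif_neg hi2]
      exact hasDerivAt_const _ _

lemma hasDerivAt_cornerMat_entry (m : ℕ) (g : ℂ → Matrix (Fin 2) (Fin 2) ℂ)
    (gt : Matrix (Fin 2) (Fin 2) ℂ) (z : ℂ)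
    (hg : ∀ i j, HasDerivAt (fun w => g w i j) (gt i j) z) (i j : Fin (2 * m)) :
    HasDerivAt (fun w => cornerMat m (g w) i j) (cornerMat m gt i j) z := by
  by_cases hi : (i:ℕ) < 2
  · by_cases hj : 2*m-2 ≤ (j:ℕ)
    · simp only [cornerMat, dif_pos hi, dif_pos hj]
      exact hg _ _
    · simp only [cornerMat, dif_pos hi, dif_neg hj]
      exact hasDerivAt_const _ _
  · simp only [cornerMat, dif_neg hi]
    exact hasDerivAt_const _ _

/-- the loop `H_λ = I + λ⁻¹H₁ + λ⁻²H₂` built from `f, g` satisfies `H_λ(0) = I`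
and solves `H_λ′ = H_λ · (λ⁻¹ η̃₋₁)` on `U`, where `η̃₋₁ = ((0, f̃, 0), (0, 0, −f̃^♯), (0, 0, 0))`. -/
theorem stmt6 (m : ℕ) (hm : 3 ≤ m) (U : Set ℂ) (hU : IsOpen U) (h0U : (0 : ℂ) ∈ U)
    (ftilde f : ℂ → Matrix (Fin 2) (Fin (2 * m - 4)) ℂ)
    (g : ℂ → Matrix (Fin 2) (Fin 2) ℂ)
    (hf0 : f 0 = 0) (hg0 : g 0 = 0)
    (hf : ∀ z ∈ U, ∀ i j, HasDerivAt (fun w => f w i j) (ftilde z i j) z)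
    (hg : ∀ z ∈ U, ∀ i j,
      HasDerivAt (fun w => g w i j) ((-(f z * sharp (2 * m - 4) (ftilde z))) i j) z) :
    ∀ lam : ℂ, lam ≠ 0 →
      ((1 : Matrix (Fin (2 * m)) (Fin (2 * m)) ℂ) + lam⁻¹ • triMat m (f 0) +
          (lam ^ 2)⁻¹ • cornerMat m (g 0) = 1) ∧
      ∀ z ∈ U, ∀ i j : Fin (2 * m),
        HasDerivAt
          (fun w => ((1 : Matrix (Fin (2 * m)) (Fin (2 * m)) ℂ) + lam⁻¹ • triMat m (f w) +
            (lam ^ 2)⁻¹ • cornerMat m (g w)) i j)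
          ((((1 : Matrix (Fin (2 * m)) (Fin (2 * m)) ℂ) + lam⁻¹ • triMat m (f z) +
              (lam ^ 2)⁻¹ • cornerMat m (g z)) *
            (lam⁻¹ • triMat m (ftilde z))) i j) z := by
  intro lam hlam
  constructor
  · rw [hf0, hg0, triMat_zero, cornerMat_zero]
    simp
  · intro z hz i j
    have key : ((1 : Matrix (Fin (2 * m)) (Fin (2 * m)) ℂ) + lam⁻¹ • triMat m (f z) +
        (lam ^ 2)⁻¹ • cornerMat m (g z)) * (lam⁻¹ • triMat m (ftilde z))
        = lam⁻¹ • triMat m (ftilde z) +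
          (lam ^ 2)⁻¹ • cornerMat m (-(f z * sharp (2 * m - 4) (ftilde z))) := by
      rw [add_mul, add_mul, one_mul]
      rw [smul_mul_smul_comm, smul_mul_smul_comm]
      rw [tri_mul_tri m hm, corner_mul_tri m _ _ hm]
      rw [smul_zero, add_zero]
      congr 2
      rw [sq, mul_inv]
    rw [key]
    have hT := hasDerivAt_triMat_entry m f (ftilde z) z (hf z hz) i j
    have hC := hasDerivAt_cornerMat_entry m g (-(f z * sharp (2 * m - 4) (ftilde z))) z
      (hg z hz) i j
    have H := ((hasDerivAt_const z ((1 : Matrix (Fin (2 * m)) (Fin (2 * m)) ℂ) i j)).add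
      (hT.const_mul lam⁻¹)).add (hC.const_mul ((lam ^ 2)⁻¹))
    simp only [Matrix.add_apply, Matrix.smul_apply, smul_eq_mul]
    rw [zero_add] at H
    exact H
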